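/- Fix a multigraph G and a positive integer k. Define the relation R^k on the vertices of G by: v₁ R^k v₂ if and only if v₁ = v₂ or there exist k pairwise edge-disjoint paths between v₁ and v₂ in G. Then R^k is an equivalence relation; in particular it is transitive: if there are k pairwise edge-disjoint paths between v₁ and v₂ and k pairwise edge-disjoint paths between v₂ and v₃, with v₁, v₂, v₃ distinct, then there are k pairwise edge-disjoint paths between v₁ and v₃. -/

import Mathlib

/-- A multigraph on vertex type `V` with edge type `E`: each edge is assigned
an unordered pair of endpoints (parallel edges and loops are allowed). -/
structure Multigraph (V : Type) (E : Type) where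
  ends : E → Sym2 V

namespace Multigraph

variable {V E : Type}

/-- Walks in a multigraph, recorded as the sequence of traversed edges. -/
inductive Walk (G : Multigraph V E) : V → V → Type
  | nil (v : V) : Walk G v v
  | cons {u v w : V} (e : E) (he : G.ends e = s(u, v)) (p : Walk G v w) : Walk G u w

/-- The list of edges traversed by a walk. -/
def Walk.edges {G : Multigraph V E} : ∀ {u v : V}, G.Walk u v → List E
  | _, _, .nil _ => []
  | _, _, .cons e _ p => e :: p.edges

/-- The list of vertices visited by a walk, in order. -/
def Walk.support {G : Multigraph V E} : ∀ {u v : V}, G.Walk u v → List V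
  | _, _, .nil v => [v]
  | u, _, .cons _ _ p => u :: p.support

/-- A path is a walk visiting no vertex twice. -/
def Walk.IsPath {G : Multigraph V E} {u v : V} (p : G.Walk u v) : Prop :=
  p.support.Nodup

/-- There exist `k` pairwise edge-disjoint `u`–`v` paths in `G`. -/
def HasEdgeDisjointPaths (G : Multigraph V E) (k : ℕ) (u v : V) : Prop :=
  ∃ f : Fin k → G.Walk u v, (∀ i, (f i).IsPath) ∧
    ∀ i j, i ≠ j → ∀ e, e ∈ (f i).edges → e ∉ (f j).edges

/-- `G` is `k`-edge-connected: it has more than one vertex and any two distinct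
vertices are joined by at least `k` pairwise edge-disjoint paths. -/
def EdgeConnected (G : Multigraph V E) (k : ℕ) : Prop :=
  (∃ u v : V, u ≠ v) ∧ ∀ u v : V, u ≠ v → G.HasEdgeDisjointPaths k u v

/-- Deletion of the edge `e₀`. -/
def deleteEdge (G : Multigraph V E) (e₀ : E) : Multigraph V {e : E // e ≠ e₀} :=
  ⟨fun e => G.ends e.1⟩

/-- `G` is an edge-minimal `k`-edge-connected multigraph. -/
def EdgeMinimal (G : Multigraph V E) (k : ℕ) : Prop :=
  G.EdgeConnected k ∧ ∀ e₀ : E, ¬ (G.deleteEdge e₀).EdgeConnected k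

/-- The unordered pair of endpoints of an edge, as a multiset. -/
def _root_.Sym2.toMset {α : Type*} : Sym2 α → Multiset α :=
  Sym2.lift ⟨fun a b => {a, b}, fun a b => Multiset.cons_swap a b 0⟩

open Classical in
/-- The degree of a vertex: the number of edge-endpoints at `v`, counting
parallel edges with multiplicity (and loops twice). -/
noncomputable def degree (G : Multigraph V E) [Fintype E] (v : V) : ℕ :=
  ∑ e : E, Multiset.count v (G.ends e).toMset

/-- The relation `R^k`: `v₁ R^k v₂` iff `v₁ = v₂` or there are `k` pairwise
edge-disjoint paths between `v₁` and `v₂`. -/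
def Rel (G : Multigraph V E) (k : ℕ) (v₁ v₂ : V) : Prop :=
  v₁ = v₂ ∨ G.HasEdgeDisjointPaths k v₁ v₂

end Multigraph

namespace Multigraph

variable {G : Multigraph V E}

namespace Walk

def append : ∀ {a b c : V}, G.Walk a b → G.Walk b c → G.Walk a c
  | _, _, _, .nil _, q => q
  | _, _, _, .cons e he p, q => .cons e he (p.append q)

@[simp] lemma nil_append {a b : V} (q : G.Walk a b) : (Walk.nil a).append q = q := rfl

@[simp] lemma cons_append {a b c d : V} (e : E) (he : G.ends e = s(a, b))
    (p : G.Walk b c) (q : G.Walk c d) :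
    (Walk.cons e he p).append q = .cons e he (p.append q) := rfl

@[simp] lemma edges_append : ∀ {a b c : V} (p : G.Walk a b) (q : G.Walk b c),
    (p.append q).edges = p.edges ++ q.edges
  | _, _, _, .nil _, q => rfl
  | _, _, _, .cons e he p, q => by simp [append, edges, edges_append p q]

lemma support_eq_cons : ∀ {a b : V} (p : G.Walk a b), p.support = a :: p.support.tail
  | _, _, .nil _ => rfl
  | _, _, .cons _ _ _ => rfl

lemma support_append : ∀ {a b c : V} (p : G.Walk a b) (q : G.Walk b c),
    (p.append q).support = p.support ++ q.support.tail
  | _, _, _, .nil v, q => by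
      simpa [append, support] using support_eq_cons q
  | _, _, _, .cons e he p, q => by
      simp [append, support, support_append p q]

def reverse : ∀ {a b : V}, G.Walk a b → G.Walk b a
  | _, _, .nil v => .nil v
  | _, _, .cons (u := x) (v := y) e he p =>
      p.reverse.append (.cons e (by rw [he, Sym2.eq_swap]) (.nil x))

@[simp] lemma edges_reverse : ∀ {a b : V} (p : G.Walk a b), p.reverse.edges = p.edges.reverse
  | _, _, .nil _ => rfl
  | _, _, .cons e he p => by simp [reverse, edges, edges_reverse p]

@[simp] lemma support_reverse : ∀ {a b : V} (p : G.Walk a b),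
    p.reverse.support = p.support.reverse
  | _, _, .nil _ => rfl
  | _, _, .cons e he p => by
      simp [reverse, support_append, support, support_reverse p]

/-- Split off a suffix walk starting at a vertex of the support. -/
lemma exists_suffix_from : ∀ {a b : V} (w : G.Walk a b) (x : V), x ∈ w.support →
    ∃ w₂ : G.Walk x b, (∀ e ∈ w₂.edges, e ∈ w.edges) ∧ w₂.support.IsSuffix w.support
  | _, _, .nil v, x, hx => by
      simp only [support, List.mem_singleton] at hx
      subst hx
      exact ⟨.nil x, by simp [Walk.edges], List.suffix_refl _⟩
  | a, b, .cons e he p, x, hx => by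
      rcases List.mem_cons.1 hx with h | h
      · subst h
        exact ⟨.cons e he p, fun _ h => h, List.suffix_refl _⟩
      · obtain ⟨w₂, hsub, hsuf⟩ := exists_suffix_from p x h
        exact ⟨w₂, fun e' he' => List.mem_cons_of_mem _ (hsub e' he'),
          hsuf.trans (List.suffix_cons _ _)⟩

/-- Every walk contains a path with the same endpoints using a subset of its edges. -/
lemma exists_path_le : ∀ {a b : V} (w : G.Walk a b),
    ∃ p : G.Walk a b, p.IsPath ∧ ∀ e ∈ p.edges, e ∈ w.edges
  | _, _, .nil v => ⟨.nil v, by simp [IsPath, support], by simp [edges]⟩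
  | a, b, .cons e he p => by
      obtain ⟨p', hp', hsub⟩ := exists_path_le p
      by_cases hmem : a ∈ p'.support
      · obtain ⟨w₂, hsub₂, hsuf⟩ := exists_suffix_from p' a hmem
        exact ⟨w₂, hsuf.sublist.nodup hp', fun e' he' =>
          List.mem_cons_of_mem _ (hsub e' (hsub₂ e' he'))⟩
      · refine ⟨.cons e he p', ?_, ?_⟩
        · simpa [IsPath, support] using ⟨hmem, hp'⟩
        · intro e' he'
          rcases List.mem_cons.1 he' with h | h
          · simp [edges, h]
          · exact List.mem_cons_of_mem _ (hsub e' h)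

end Walk

lemma HasEdgeDisjointPaths.symm {k : ℕ} {a b : V} (h : G.HasEdgeDisjointPaths k a b) :
    G.HasEdgeDisjointPaths k b a := by
  obtain ⟨f, hf, hdisj⟩ := h
  refine ⟨fun i => (f i).reverse, fun i => ?_, fun i j hij e hei hej => ?_⟩
  · unfold Walk.IsPath
    rw [Walk.support_reverse]
    exact List.nodup_reverse.2 (hf i)
  · rw [Walk.edges_reverse, List.mem_reverse] at hei hej
    exact hdisj i j hij e hei hej


section Flow
open scoped Classical

open Classical in
noncomputable def orient (G : Multigraph V E) (e : E) : V × V :=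
  Classical.choose (show ∃ p : V × V, G.ends e = s(p.1, p.2) by
    induction (G.ends e) using Sym2.ind with | _ x y => exact ⟨(x, y), rfl⟩)

lemma orient_spec (G : Multigraph V E) (e : E) :
    G.ends e = s((G.orient e).1, (G.orient e).2) :=
  Classical.choose_spec (show ∃ p : V × V, G.ends e = s(p.1, p.2) by
    induction (G.ends e) using Sym2.ind with | _ x y => exact ⟨(x, y), rfl⟩)

lemma orient_cases {e : E} {a b : V} (h : G.ends e = s(a, b)) :
    G.orient e = (a, b) ∨ G.orient e = (b, a) := by
  have := (G.orient_spec e).symm.trans h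
  rw [Sym2.eq_iff] at this
  rcases this with ⟨h1, h2⟩ | ⟨h1, h2⟩
  · exact Or.inl (Prod.ext h1 h2)
  · exact Or.inr (Prod.ext h1 h2)

lemma ends_of_orient {e : E} {a b : V} (h : G.orient e = (a, b)) :
    G.ends e = s(a, b) := by
  rw [G.orient_spec e, h]

/-- Signed incidence of edge `e` at vertex `v` (w.r.t. the chosen orientation). -/
noncomputable def dd (G : Multigraph V E) (e : E) (v : V) : ℤ :=
  (if v = (G.orient e).1 then 1 else 0) - (if v = (G.orient e).2 then 1 else 0)

/-- Divergence of `f` at `v`, summed over the edge set `S`. -/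
noncomputable def dvg (S : Finset E) (f : E → ℤ) (v : V) : ℤ :=
  ∑ e ∈ S, f e * G.dd e v

variable (S : Finset E) (u t : V)

structure IsFlow (f : E → ℤ) : Prop where
  cap : ∀ e, f e = -1 ∨ f e = 0 ∨ f e = 1
  supp : ∀ e ∉ S, f e = 0
  consv : ∀ v, v ≠ u → v ≠ t → dvg (G := G) S f v = 0

lemma dvg_add (f g : E → ℤ) (v : V) :
    dvg (G := G) S (fun e => f e + g e) v = dvg (G := G) S f v + dvg (G := G) S g v := by
  simp [dvg, add_mul, Finset.sum_add_distrib]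

lemma sum_dd (T : Finset V) (e : E) :
    ∑ v ∈ T, G.dd e v =
      (if (G.orient e).1 ∈ T then 1 else 0) - (if (G.orient e).2 ∈ T then 1 else 0) := by
  simp [dd, Finset.sum_sub_distrib, Finset.sum_ite_eq' T]


section Residual
variable (f : E → ℤ)

/-- One residual step along edge `e` from `a` to `b`. -/
def Rok (e : E) (a b : V) : Prop :=
  e ∈ S ∧ a ≠ b ∧
    ((G.orient e = (a, b) ∧ f e ≤ 0) ∨ (G.orient e = (b, a) ∧ 0 ≤ f e))

/-- All steps of the walk are residual steps. -/
def ResOk : ∀ {a b : V}, G.Walk a b → Prop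
  | _, _, .nil _ => True
  | _, _, .cons (u := x) (v := y) e _ p => Rok (G := G) S f e x y ∧ ResOk p

@[simp] lemma resOk_nil (v : V) : ResOk S f (.nil (G := G) v) := trivial

@[simp] lemma resOk_cons {x y b : V} (e : E) (he : G.ends e = s(x, y)) (p : G.Walk y b) :
    ResOk S f (.cons e he p) ↔ Rok (G := G) S f e x y ∧ ResOk S f p := Iff.rfl

lemma ResOk.append : ∀ {a b c : V} {p : G.Walk a b} {q : G.Walk b c},
    ResOk S f p → ResOk S f q → ResOk S f (p.append q)
  | _, _, _, .nil _, q, _, hq => hq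
  | _, _, _, .cons e he p, q, hp, hq => ⟨hp.1, ResOk.append hp.2 hq⟩

lemma ResOk.append_iff : ∀ {a b c : V} (p : G.Walk a b) (q : G.Walk b c),
    ResOk S f (p.append q) ↔ ResOk S f p ∧ ResOk S f q
  | _, _, _, .nil _, q => by simp [Walk.append]
  | _, _, _, .cons e he p, q => by
      simp [Walk.append, ResOk.append_iff p q, and_assoc]

lemma ResOk.mem_S : ∀ {a b : V} {w : G.Walk a b}, ResOk S f w → ∀ e ∈ w.edges, e ∈ S
  | _, _, .nil _, _, e, he => by simp [Walk.edges] at he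
  | _, _, .cons e₀ h p, hw, e, he => by
      rcases List.mem_cons.1 he with h1 | h1
      · exact h1 ▸ hw.1.1
      · exact ResOk.mem_S hw.2 e h1

/-- The augmentation increment along a walk. -/
noncomputable def aug : ∀ {a b : V}, G.Walk a b → E → ℤ
  | _, _, .nil _, _ => 0
  | _, _, .cons (u := x) (v := y) e₀ _ p, e =>
      (if e = e₀ then (if G.orient e₀ = (x, y) then 1 else -1) else 0) + aug p e

lemma aug_eq_zero : ∀ {a b : V} (w : G.Walk a b) (e : E), e ∉ w.edges → aug (G := G) w e = 0
  | _, _, .nil _, e, _ => rfl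
  | _, _, .cons e₀ h p, e, he => by
      have h1 : e ≠ e₀ := fun hc => he (hc ▸ List.mem_cons_self)
      have h2 : e ∉ p.edges := fun hc => he (List.mem_cons_of_mem _ hc)
      simp [aug, h1, aug_eq_zero p e h2]

lemma aug_of_trail : ∀ {a b : V} (w : G.Walk a b), ResOk S f w → w.edges.Nodup →
    ∀ e ∈ w.edges, (aug (G := G) w e = 1 ∧ f e ≤ 0) ∨ (aug (G := G) w e = -1 ∧ 0 ≤ f e)
  | _, _, .nil _, _, _, e, he => by simp [Walk.edges] at he
  | _, _, .cons (u := x) (v := y) e₀ h p, hw, hnd, e, he => by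
      rw [Walk.edges, List.nodup_cons] at hnd
      rcases List.mem_cons.1 he with h1 | h1
      · subst h1
        have hz : aug (G := G) p e = 0 := aug_eq_zero p e hnd.1
        rcases hw.1.2.2 with ⟨ho, hf⟩ | ⟨ho, hf⟩
        · left; simp [aug, ho, hz, hf]
        · have hne : G.orient e ≠ (x, y) := by
            rw [ho]; intro hc
            have : y = x := congrArg Prod.fst hc
            exact hw.1.2.1 this.symm
          right; simp [aug, hne, hz, hf]
      · have h1' : e ≠ e₀ := fun hc => hnd.1 (hc ▸ h1)
        have := aug_of_trail p hw.2 hnd.2 e h1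
        simpa [aug, h1'] using this

lemma dvg_aug : ∀ {a b : V} (w : G.Walk a b), ResOk S f w → ∀ v,
    dvg (G := G) S (aug (G := G) w) v = (if v = a then 1 else 0) - (if v = b then 1 else 0)
  | _, _, .nil _, _, v => by simp [dvg, aug]
  | _, _, .cons (u := x) (v := y) e₀ h p, hw, v => by
      have heq : dvg (G := G) S (aug (G := G) (.cons e₀ h p)) v =
          (∑ e ∈ S, (if e = e₀ then (if G.orient e₀ = (x, y) then (1 : ℤ) else -1) else 0)
            * G.dd e v) + dvg (G := G) S (aug (G := G) p) v := by
        simp [dvg, aug, add_mul, Finset.sum_add_distrib]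
      rw [heq, dvg_aug p hw.2 v]
      have he₀S : e₀ ∈ S := hw.1.1
      have hsingle : ∑ e ∈ S, (if e = e₀ then (if G.orient e₀ = (x, y) then (1 : ℤ) else -1) else 0)
            * G.dd e v = (if G.orient e₀ = (x, y) then (1 : ℤ) else -1) * G.dd e₀ v := by
        rw [Finset.sum_eq_single_of_mem e₀ he₀S]
        · simp
        · intro e heS hne
          simp [hne]
      rw [hsingle]
      have hstep : (if G.orient e₀ = (x, y) then (1 : ℤ) else -1) * G.dd e₀ v =
          (if v = x then 1 else 0) - (if v = y then 1 else 0) := by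
        rcases hw.1.2.2 with ⟨ho, _⟩ | ⟨ho, _⟩
        · rw [if_pos ho]
          simp only [dd, ho]
          ring
        · have hne : G.orient e₀ ≠ (x, y) := by
            rw [ho]; intro hc
            have : y = x := congrArg Prod.fst hc
            exact hw.1.2.1 this.symm
          rw [if_neg hne]
          simp only [dd, ho]
          ring
      rw [hstep]
      ring


lemma augment (hf : IsFlow (G := G) S u t f) (hut : u ≠ t)
    (w : G.Walk u t) (hw : ResOk S f w) (hnd : w.edges.Nodup) :
    IsFlow (G := G) S u t (fun e => f e + aug (G := G) w e) ∧
      dvg (G := G) S (fun e => f e + aug (G := G) w e) u = dvg (G := G) S f u + 1 := by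
  refine ⟨⟨?_, ?_, ?_⟩, ?_⟩
  · intro e
    by_cases he : e ∈ w.edges
    · rcases aug_of_trail S f w hw hnd e he with ⟨h1, h2⟩ | ⟨h1, h2⟩ <;>
        rcases hf.cap e with h | h | h <;> omega
    · rw [aug_eq_zero w e he]
      simpa using hf.cap e
  · intro e heS
    rw [hf.supp e heS, aug_eq_zero w e fun hc => heS (ResOk.mem_S S f hw e hc)]
    ring
  · intro v hvu hvt
    rw [dvg_add, hf.consv v hvu hvt, dvg_aug S f w hw v, if_neg hvu, if_neg hvt]
    ring
  · rw [dvg_add, dvg_aug S f w hw u, if_pos rfl, if_neg hut]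
    ring

/-- Vertices reachable from `u` by residual walks. -/
def Rset (G : Multigraph V E) (S : Finset E) (u : V) (f : E → ℤ) : Set V :=
  {x | ∃ w : G.Walk u x, ResOk S f w}

def Cross (G : Multigraph V E) (S : Finset E) (u : V) (f : E → ℤ) (e : E) : Prop :=
  ((G.orient e).1 ∈ Rset G S u f ∧ (G.orient e).2 ∉ Rset G S u f ∧ f e = 1) ∨
    ((G.orient e).1 ∉ Rset G S u f ∧ (G.orient e).2 ∈ Rset G S u f ∧ f e = -1)

noncomputable def Fcut (G : Multigraph V E) (S : Finset E) (u : V) (f : E → ℤ) :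
    Finset E := S.filter (Cross G S u f)

lemma u_mem_Rset (G₀ : Multigraph V E) (S₀ : Finset E) (u₀ : V) (f₀ : E → ℤ) :
    u₀ ∈ Rset G₀ S₀ u₀ f₀ := ⟨.nil u₀, trivial⟩

lemma step_reach {a b : V} (ha : a ∈ Rset G S u f) {e : E}
    (h : Rok (G := G) S f e a b) : b ∈ Rset G S u f := by
  obtain ⟨w, hw⟩ := ha
  have hends : G.ends e = s(a, b) := by
    rcases h.2.2 with ⟨ho, _⟩ | ⟨ho, _⟩
    · exact ends_of_orient ho
    · rw [ends_of_orient ho, Sym2.eq_swap]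
  exact ⟨w.append (.cons e hends (.nil b)), ResOk.append S f hw ⟨h, trivial⟩⟩

lemma not_cross_reach (hf : IsFlow (G := G) S u t f) {a b : V} (ha : a ∈ Rset G S u f) {e : E}
    (heS : e ∈ S) (heF : e ∉ Fcut G S u f) (hends : G.ends e = s(a, b)) : b ∈ Rset G S u f := by
  by_cases hab : a = b
  · exact hab ▸ ha
  by_contra hb
  have hnotR : ¬ Rok (G := G) S f e a b := fun h => hb (step_reach S u f ha h)
  rcases orient_cases hends with ho | ho
  · have hf1 : ¬ (f e ≤ 0) := fun h => hnotR ⟨heS, hab, Or.inl ⟨ho, h⟩⟩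
    have hfe : f e = 1 := by rcases hf.cap e with h | h | h <;> omega
    exact heF (Finset.mem_filter.2 ⟨heS, Or.inl
      ⟨by rw [ho]; exact ha, by rw [ho]; exact hb, hfe⟩⟩)
  · have hf2 : ¬ (0 ≤ f e) := fun h => hnotR ⟨heS, hab, Or.inr ⟨ho, h⟩⟩
    have hfe : f e = -1 := by rcases hf.cap e with h | h | h <;> omega
    exact heF (Finset.mem_filter.2 ⟨heS, Or.inr
      ⟨by rw [ho]; exact hb, by rw [ho]; exact ha, hfe⟩⟩)

lemma reach_walk (hf : IsFlow (G := G) S u t f) :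
    ∀ {a b : V} (w : G.Walk a b), a ∈ Rset G S u f → (∀ e ∈ w.edges, e ∈ S) →
      (∀ e ∈ w.edges, e ∉ Fcut G S u f) → b ∈ Rset G S u f
  | _, _, .nil _, ha, _, _ => ha
  | _, _, .cons e he p, ha, hS, hF => by
      have hb := not_cross_reach S u t f hf ha
        (hS e (List.mem_cons_self)) (hF e (List.mem_cons_self)) he
      exact reach_walk hf p hb (fun e' h => hS e' (List.mem_cons_of_mem _ h))
        (fun e' h => hF e' (List.mem_cons_of_mem _ h))

lemma dvg_eq_card (hf : IsFlow (G := G) S u t f) (ht : t ∉ Rset G S u f) :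
    dvg (G := G) S f u = (Fcut G S u f).card := by
  classical
  set R := Rset G S u f with hR
  set T : Finset V :=
    ((S.biUnion fun e => {(G.orient e).1, (G.orient e).2}) ∪ {u}).filter (· ∈ R) with hT
  have hu : u ∈ T := by
    rw [hT, Finset.mem_filter]
    exact ⟨Finset.mem_union_right _ (Finset.mem_singleton_self u), u_mem_Rset G S u f⟩
  have hmemT : ∀ v, v ∈ T ↔ (v ∈ (S.biUnion fun e => {(G.orient e).1, (G.orient e).2}) ∪ {u}) ∧ v ∈ R := by
    intro v; rw [hT, Finset.mem_filter]
  have h1 : ∑ v ∈ T, dvg (G := G) S f v = dvg (G := G) S f u := by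
    apply Finset.sum_eq_single_of_mem u hu
    intro v hv hvu
    have hvR : v ∈ R := ((hmemT v).1 hv).2
    have hvt : v ≠ t := fun hc => ht (hc ▸ hvR)
    exact hf.consv v hvu hvt
  have h2 : ∑ v ∈ T, dvg (G := G) S f v = ∑ e ∈ S, f e *
      ((if (G.orient e).1 ∈ T then 1 else 0) - (if (G.orient e).2 ∈ T then 1 else 0)) := by
    unfold dvg
    rw [Finset.sum_comm]
    refine Finset.sum_congr rfl fun e _ => ?_
    rw [← Finset.mul_sum, sum_dd]
  have hTR : ∀ e ∈ S, ((G.orient e).1 ∈ T ↔ (G.orient e).1 ∈ R) ∧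
      ((G.orient e).2 ∈ T ↔ (G.orient e).2 ∈ R) := by
    intro e heS
    constructor
    · rw [hmemT]
      refine ⟨fun h => h.2, fun h => ⟨Finset.mem_union_left _ ?_, h⟩⟩
      exact Finset.mem_biUnion.2 ⟨e, heS, by simp⟩
    · rw [hmemT]
      refine ⟨fun h => h.2, fun h => ⟨Finset.mem_union_left _ ?_, h⟩⟩
      exact Finset.mem_biUnion.2 ⟨e, heS, by simp⟩
  have h3 : ∀ e ∈ S, f e *
      ((if (G.orient e).1 ∈ T then 1 else 0) - (if (G.orient e).2 ∈ T then 1 else 0)) =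
      if Cross G S u f e then 1 else 0 := by
    intro e heS
    obtain ⟨hT1, hT2⟩ := hTR e heS
    have ho : G.orient e = ((G.orient e).1, (G.orient e).2) := Prod.mk.eta.symm
    by_cases hx : (G.orient e).1 ∈ R <;> by_cases hy : (G.orient e).2 ∈ R
    · rw [if_pos (hT1.2 hx), if_pos (hT2.2 hy), if_neg]
      · ring
      · rintro (⟨_, h, _⟩ | ⟨h, _, _⟩) <;> [exact h hy; exact h hx]
    · have hxy : (G.orient e).1 ≠ (G.orient e).2 := fun hc => hy (hc ▸ hx)
      have hfe : f e = 1 := by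
        have : ¬ (f e ≤ 0) := fun h => hy (step_reach S u f hx ⟨heS, hxy, Or.inl ⟨ho, h⟩⟩)
        rcases hf.cap e with h | h | h <;> omega
      rw [if_pos (hT1.2 hx), if_neg (fun h => hy (hT2.1 h)), if_pos (show Cross G S u f e from Or.inl ⟨hx, hy, hfe⟩)]
      rw [hfe]; ring
    · have hxy : (G.orient e).2 ≠ (G.orient e).1 := fun hc => hx (hc ▸ hy)
      have hfe : f e = -1 := by
        have : ¬ (0 ≤ f e) := fun h => hx (step_reach S u f hy ⟨heS, hxy, Or.inr ⟨ho, h⟩⟩)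
        rcases hf.cap e with h | h | h <;> omega
      rw [if_neg (fun h => hx (hT1.1 h)), if_pos (hT2.2 hy), if_pos (show Cross G S u f e from Or.inr ⟨hx, hy, hfe⟩)]
      rw [hfe]; ring
    · rw [if_neg (fun h => hx (hT1.1 h)), if_neg (fun h => hy (hT2.1 h)), if_neg]
      · ring
      · rintro (⟨h, _, _⟩ | ⟨_, h, _⟩) <;> [exact hx h; exact hy h]
  have h4 : dvg (G := G) S f u = ∑ e ∈ S, if Cross G S u f e then (1 : ℤ) else 0 := by
    rw [← h1, h2]
    exact Finset.sum_congr rfl h3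
  rw [h4, Fcut, Finset.sum_boole]

lemma split_first : ∀ {a b : V} (w : G.Walk a b) (e : E), e ∈ w.edges →
    ∃ (x y : V) (hxy : G.ends e = s(x, y)) (w₁ : G.Walk a x) (w₂ : G.Walk y b),
      w = w₁.append (.cons e hxy w₂)
  | _, _, .nil _, e, he => by simp [Walk.edges] at he
  | a, b, .cons (v := v') e₀ he₀ p, e, he => by
      by_cases hc : e = e₀
      · subst hc
        exact ⟨a, v', he₀, .nil a, p, rfl⟩
      · have hmem : e ∈ p.edges := by
          rcases List.mem_cons.1 he with h | h
          · exact absurd h hc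
          · exact h
        obtain ⟨x, y, hxy, w₁, w₂, hw⟩ := split_first p e hmem
        exact ⟨x, y, hxy, .cons e₀ he₀ w₁, w₂, by rw [hw]; rfl⟩

lemma shorten : ∀ {a b : V} (w : G.Walk a b), ResOk S f w → ¬ w.edges.Nodup →
    ∃ w' : G.Walk a b, ResOk S f w' ∧ w'.edges.length < w.edges.length ∧
      ∀ e ∈ w'.edges, e ∈ w.edges
  | _, _, .nil _, _, hnd => absurd List.nodup_nil hnd
  | a, b, .cons (v := v') e₀ he₀ p, hw, hnd => by
      by_cases hp : p.edges.Nodup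
      · have he₀p : e₀ ∈ p.edges := by
          by_contra hne
          exact hnd (List.nodup_cons.2 ⟨hne, hp⟩)
        obtain ⟨x, y, hxy, w₁, w₂, hw2⟩ := split_first p e₀ he₀p
        have hres : ResOk S f p := hw.2
        rw [hw2, ResOk.append_iff] at hres
        have hw₂res : ResOk S f w₂ := hres.2.2
        have hss : s(x, y) = s(a, v') := hxy.symm.trans he₀
        rw [Sym2.eq_iff] at hss
        have hlen : p.edges.length = w₁.edges.length + 1 + w₂.edges.length := by
          rw [hw2]; simp [Walk.edges]; omega
        rcases hss with ⟨h1, h2⟩ | ⟨h1, h2⟩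
        · subst h1; subst h2
          refine ⟨.cons e₀ he₀ w₂, ⟨hw.1, hw₂res⟩, ?_, ?_⟩
          · simp only [Walk.edges, List.length_cons]
            omega
          · intro e hee
            rcases List.mem_cons.1 hee with h | h
            · exact h ▸ List.mem_cons_self
            · refine List.mem_cons_of_mem _ ?_
              rw [hw2]
              simp [Walk.edges, h]
        · subst h1; subst h2
          refine ⟨w₂, hw₂res, ?_, ?_⟩
          · simp only [Walk.edges, List.length_cons]
            omega
          · intro e hee
            refine List.mem_cons_of_mem _ ?_
            rw [hw2]
            simp [Walk.edges, hee]
      · obtain ⟨p', h1, h2, h3⟩ := shorten p hw.2 hp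
        refine ⟨.cons e₀ he₀ p', ⟨hw.1, h1⟩, ?_, ?_⟩
        · simp only [Walk.edges, List.length_cons]
          omega
        · intro e hee
          rcases List.mem_cons.1 hee with h | h
          · exact h ▸ List.mem_cons_self
          · exact List.mem_cons_of_mem _ (h3 e h)

lemma dedup : ∀ (n : ℕ) {a b : V} (w : G.Walk a b), w.edges.length ≤ n → ResOk S f w →
    ∃ w' : G.Walk a b, ResOk S f w' ∧ w'.edges.Nodup := by
  intro n
  induction n with
  | zero =>
    intro a b w hl hw
    have hlen : w.edges.length = 0 := Nat.le_antisymm hl (Nat.zero_le _)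
    exact ⟨w, hw, (List.eq_nil_of_length_eq_zero hlen) ▸ List.nodup_nil⟩
  | succ n ih =>
    intro a b w hl hw
    by_cases hnd : w.edges.Nodup
    · exact ⟨w, hw, hnd⟩
    · obtain ⟨w', h1, h2, _⟩ := shorten S f w hw hnd
      exact ih w' (by omega) h1


/-- Edges with nonzero flow. -/
noncomputable def suppS (G : Multigraph V E) (S : Finset E) (f : E → ℤ) : Finset E :=
  S.filter fun e => f e ≠ 0

/-- Head of the forward direction of an edge carrying flow. -/
noncomputable def F1 (G : Multigraph V E) (f : E → ℤ) (e : E) : V :=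
  if f e = 1 then (G.orient e).1 else (G.orient e).2

noncomputable def F2 (G : Multigraph V E) (f : E → ℤ) (e : E) : V :=
  if f e = 1 then (G.orient e).2 else (G.orient e).1

noncomputable def outc (G : Multigraph V E) (f : E → ℤ) (v : V) (A : Finset E) : ℤ :=
  ∑ e ∈ A, if v = F1 G f e then 1 else 0

noncomputable def innc (G : Multigraph V E) (f : E → ℤ) (v : V) (A : Finset E) : ℤ :=
  ∑ e ∈ A, if v = F2 G f e then 1 else 0

def Fok (G : Multigraph V E) (f : E → ℤ) (e : E) (a b : V) : Prop :=
  (G.orient e = (a, b) ∧ f e = 1) ∨ (G.orient e = (b, a) ∧ f e = -1)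

def FwdOk (f : E → ℤ) : ∀ {a b : V}, G.Walk a b → Prop
  | _, _, .nil _ => True
  | _, _, .cons (u := x) (v := y) e _ p => Fok G f e x y ∧ FwdOk f p

lemma fok_self {f : E → ℤ} {e : E} (h : f e = 1 ∨ f e = -1) :
    Fok G f e (F1 G f e) (F2 G f e) := by
  rcases h with h | h
  · exact Or.inl ⟨Prod.ext (by simp [F1, h]) (by simp [F2, h]), h⟩
  · have h1 : f e ≠ 1 := by rw [h]; decide
    exact Or.inr ⟨Prod.ext (by simp [F2, h1]) (by simp [F1, h1]), h⟩

lemma fok_ends {f : E → ℤ} {e : E} {a b : V} (h : Fok G f e a b) : G.ends e = s(a, b) := by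
  rcases h with ⟨ho, _⟩ | ⟨ho, _⟩
  · exact ends_of_orient ho
  · rw [ends_of_orient ho, Sym2.eq_swap]

lemma mul_dd {f : E → ℤ} {e : E} (h : f e = 1 ∨ f e = -1) (v : V) :
    f e * G.dd e v = (if v = F1 G f e then 1 else 0) - (if v = F2 G f e then 1 else 0) := by
  rcases h with h | h
  · simp [F1, F2, dd, h]
  · have h1 : f e ≠ 1 := by rw [h]; decide
    simp only [F1, F2, dd, if_neg h1]
    rw [h]
    ring

lemma dvg_eq_out_sub_inn (hf : IsFlow (G := G) S u t f) (v : V) :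
    dvg (G := G) S f v = outc G f v (suppS G S f) - innc G f v (suppS G S f) := by
  unfold dvg outc innc
  rw [← Finset.sum_sub_distrib, suppS, Finset.sum_filter]
  refine Finset.sum_congr rfl fun e _ => ?_
  by_cases h0 : f e = 0
  · simp [h0]
  · rw [if_pos h0]
    refine mul_dd ?_ v
    rcases hf.cap e with h | h | h
    · exact Or.inr h
    · exact absurd h h0
    · exact Or.inl h

lemma innc_nonneg (f : E → ℤ) (v : V) (A : Finset E) : 0 ≤ innc G f v A :=
  Finset.sum_nonneg fun e _ => by positivity

lemma outc_nonneg (f : E → ℤ) (v : V) (A : Finset E) : 0 ≤ outc G f v A :=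
  Finset.sum_nonneg fun e _ => by positivity

lemma outc_sdiff (f : E → ℤ) (v : V) {U A : Finset E} (h : U ⊆ A) :
    outc G f v A = outc G f v U + outc G f v (A \ U) := by
  unfold outc
  rw [← Finset.sum_sdiff h]
  ring

lemma innc_sdiff (f : E → ℤ) (v : V) {U A : Finset E} (h : U ⊆ A) :
    innc G f v A = innc G f v U + innc G f v (A \ U) := by
  unfold innc
  rw [← Finset.sum_sdiff h]
  ring

lemma find_step (hf : IsFlow (G := G) S u t f) (hj : 1 ≤ dvg (G := G) S f u)
    {x : V} (hxt : x ≠ t) {U : Finset E} (hU : U ⊆ suppS G S f)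
    (hinv : outc G f x U - innc G f x U =
      (if x = u then 1 else 0) - 1) :
    ∃ e ∈ suppS G S f \ U, x = F1 G f e := by
  have hdvg := dvg_eq_out_sub_inn S u t f hf x
  have hsplit_out := outc_sdiff (G := G) f x hU
  have hsplit_inn := innc_sdiff (G := G) f x hU
  have hmono : 0 ≤ innc G f x (suppS G S f \ U) := innc_nonneg (G := G) f x _
  have hdx : (if x = u then (1 : ℤ) else 0) ≤ dvg (G := G) S f x := by
    by_cases hxu : x = u
    · rw [if_pos hxu, hxu]
      exact hj
    · rw [if_neg hxu, hf.consv x hxu hxt]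
  have havail : 1 ≤ outc G f x (suppS G S f \ U) := by
    linarith [hinv, hdx, hmono, hdvg, hsplit_out, hsplit_inn]
  by_contra hcon
  push_neg at hcon
  have : outc G f x (suppS G S f \ U) = 0 :=
    Finset.sum_eq_zero fun e he => if_neg (hcon e he)
  omega

lemma extract : ∀ (n : ℕ) (x : V) (U : Finset E),
    IsFlow (G := G) S u t f → 1 ≤ dvg (G := G) S f u → u ≠ t →
    U ⊆ suppS G S f → ((suppS G S f) \ U).card ≤ n →
    (∀ v, v ≠ t → outc G f v U - innc G f v U =
      (if v = u then 1 else 0) - (if v = x then 1 else 0)) →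
    ∃ w : G.Walk x t, FwdOk f w ∧ w.edges.Nodup ∧
      ∀ e ∈ w.edges, e ∈ (suppS G S f) \ U := by
  intro n
  induction n with
  | zero =>
    intro x U hf hj hut hU hcard hinv
    by_cases hxt : x = t
    · subst hxt
      exact ⟨.nil x, trivial, List.nodup_nil, by simp [Walk.edges]⟩
    · obtain ⟨e, he, -⟩ := find_step S u t f hf hj hxt hU (by simpa using hinv x hxt)
      have : 0 < ((suppS G S f) \ U).card := Finset.card_pos.2 ⟨e, he⟩
      omega
  | succ n ih =>
    intro x U hf hj hut hU hcard hinv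
    by_cases hxt : x = t
    · subst hxt
      exact ⟨.nil x, trivial, List.nodup_nil, by simp [Walk.edges]⟩
    obtain ⟨e, he, hF1⟩ := find_step S u t f hf hj hxt hU (by simpa using hinv x hxt)
    have heS : e ∈ suppS G S f := (Finset.mem_sdiff.1 he).1
    have heU : e ∉ U := (Finset.mem_sdiff.1 he).2
    have hfe : f e = 1 ∨ f e = -1 := by
      have h0 : f e ≠ 0 := (Finset.mem_filter.1 heS).2
      rcases hf.cap e with h | h | h
      · exact Or.inr h
      · exact absurd h h0
      · exact Or.inl h
    set y := F2 G f e with hy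
    have hfok : Fok G f e x y := by
      rw [hF1, hy]
      exact fok_self hfe
    have hends : G.ends e = s(x, y) := fok_ends hfok
    have hU' : insert e U ⊆ suppS G S f := Finset.insert_subset heS hU
    have hcard' : ((suppS G S f) \ insert e U).card ≤ n := by
      rw [Finset.sdiff_insert, Finset.card_erase_of_mem he]
      have : 0 < ((suppS G S f) \ U).card := Finset.card_pos.2 ⟨e, he⟩
      omega
    have hinv' : ∀ v, v ≠ t → outc G f v (insert e U) - innc G f v (insert e U) =
        (if v = u then 1 else 0) - (if v = y then 1 else 0) := by
      intro v hvt
      have h1 : outc G f v (insert e U) = outc G f v U + (if v = x then 1 else 0) := by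
        unfold outc
        rw [Finset.sum_insert heU, ← hF1]
        ring
      have h2 : innc G f v (insert e U) = innc G f v U + (if v = y then 1 else 0) := by
        unfold innc
        rw [Finset.sum_insert heU, ← hy]
        ring
      have h3 := hinv v hvt
      rw [h1, h2]
      omega
    obtain ⟨w', hw'fok, hw'nd, hw'sub⟩ := ih y (insert e U) hf hj hut hU' hcard' hinv'
    refine ⟨.cons e hends w', ⟨hfok, hw'fok⟩, ?_, ?_⟩
    · rw [Walk.edges, List.nodup_cons]
      refine ⟨fun hc => ?_, hw'nd⟩
      have := hw'sub e hc
      rw [Finset.mem_sdiff] at this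
      exact this.2 (Finset.mem_insert_self _ _)
    · intro e' he'
      rcases List.mem_cons.1 he' with h | h
      · exact h ▸ he
      · have := hw'sub e' h
        rw [Finset.mem_sdiff] at this ⊢
        exact ⟨this.1, fun hc => this.2 (Finset.mem_insert_of_mem hc)⟩


lemma fok_f1 {f : E → ℤ} {e : E} {a b : V} (h : Fok G f e a b) :
    F1 G f e = a ∧ F2 G f e = b := by
  rcases h with ⟨ho, h1⟩ | ⟨ho, h1⟩
  · constructor <;> simp [F1, F2, h1, ho]
  · have hne : f e ≠ 1 := by rw [h1]; decide
    constructor <;> simp [F1, F2, if_neg hne, ho]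

lemma trail_sum (f : E → ℤ) : ∀ {a b : V} (w : G.Walk a b), FwdOk f w → w.edges.Nodup →
    ∀ v, ∑ e ∈ w.edges.toFinset, f e * G.dd e v =
      (if v = a then 1 else 0) - (if v = b then 1 else 0)
  | _, _, .nil _, _, _, v => by simp [Walk.edges]
  | _, _, .cons (u := x) (v := y) e₀ he₀ p, hw, hnd, v => by
      rw [Walk.edges, List.nodup_cons] at hnd
      have hto : (Walk.cons e₀ he₀ p).edges.toFinset = insert e₀ p.edges.toFinset := by
        simp [Walk.edges]
      rw [hto, Finset.sum_insert (by simpa using hnd.1), trail_sum f p hw.2 hnd.2 v]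
      have hfe : f e₀ = 1 ∨ f e₀ = -1 := by
        rcases hw.1 with ⟨_, h⟩ | ⟨_, h⟩
        · exact Or.inl h
        · exact Or.inr h
      obtain ⟨hF1, hF2⟩ := fok_f1 (G := G) hw.1
      rw [mul_dd (G := G) hfe v, hF1, hF2]
      ring

lemma remove (hf : IsFlow (G := G) S u t f) (hut : u ≠ t) (w : G.Walk u t)
    (hw : FwdOk f w) (hnd : w.edges.Nodup) (hsub : ∀ e ∈ w.edges, e ∈ S) :
    IsFlow (G := G) S u t (fun e => if e ∈ w.edges then 0 else f e) ∧
      dvg (G := G) S (fun e => if e ∈ w.edges then 0 else f e) u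
        = dvg (G := G) S f u - 1 := by
  have key : ∀ v, dvg (G := G) S (fun e => if e ∈ w.edges then 0 else f e) v =
      dvg (G := G) S f v - ((if v = u then 1 else 0) - (if v = t then 1 else 0)) := by
    intro v
    have hdecomp : ∀ e, (if e ∈ w.edges then (0:ℤ) else f e) * G.dd e v
        = f e * G.dd e v - (if e ∈ w.edges.toFinset then f e * G.dd e v else 0) := by
      intro e
      by_cases h : e ∈ w.edges <;> simp [h]
    unfold dvg
    rw [Finset.sum_congr rfl fun e _ => hdecomp e, Finset.sum_sub_distrib]
    rw [Finset.sum_ite_mem, Finset.inter_eq_right.2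
      (fun e he => hsub e (List.mem_toFinset.1 he)), trail_sum f w hw hnd v]
  refine ⟨⟨?_, ?_, ?_⟩, ?_⟩
  · intro e
    by_cases h : e ∈ w.edges
    · simp [h]
    · simpa [h] using hf.cap e
  · intro e heS
    by_cases h : e ∈ w.edges <;> simp [h, hf.supp e heS]
  · intro v hvu hvt
    rw [key v, hf.consv v hvu hvt, if_neg hvu, if_neg hvt]
    ring
  · rw [key u, if_pos rfl, if_neg hut]
    ring

lemma decompose : ∀ (j : ℕ) (f : E → ℤ), IsFlow (G := G) S u t f → u ≠ t →
    dvg (G := G) S f u = j →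
    ∃ L : List (G.Walk u t), L.length = j ∧
      (∀ w ∈ L, ∀ e ∈ Walk.edges w, f e ≠ 0) ∧
      L.Pairwise (fun w₁ w₂ => ∀ e ∈ Walk.edges w₁, e ∉ Walk.edges w₂) := by
  intro j
  induction j with
  | zero =>
    intro f hf hut hj
    exact ⟨[], rfl, by simp, by simp⟩
  | succ j ih =>
    intro f hf hut hj
    obtain ⟨w, hwfok, hwnd, hwsub⟩ := extract S u t f (suppS G S f).card u ∅ hf
      (by rw [hj]; push_cast; omega) hut (Finset.empty_subset _) (by simp)
      (by intro v hvt; simp [outc, innc])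
    simp only [Finset.sdiff_empty] at hwsub
    have hsub' : ∀ e ∈ w.edges, e ∈ S := fun e he =>
      (Finset.mem_filter.1 (hwsub e he)).1
    obtain ⟨hf', hdvg'⟩ := remove S u t f hf hut w hwfok hwnd hsub'
    obtain ⟨L, hlen, hne, hpw⟩ := ih _ hf' hut (by rw [hdvg', hj]; push_cast; ring)
    refine ⟨w :: L, by simp [hlen], ?_, ?_⟩
    · intro w' hw' e he
      rcases List.mem_cons.1 hw' with h | h
      · subst h
        exact (Finset.mem_filter.1 (hwsub e he)).2
      · have h2 := hne w' h e he
        by_cases hmem : e ∈ w.edges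
        · simp [hmem] at h2
        · simpa [hmem] using h2
    · rw [List.pairwise_cons]
      refine ⟨?_, hpw⟩
      intro w' hw' e he hc
      have h2 := hne w' hw' e hc
      simp [he] at h2

lemma flow_exists (hut : u ≠ t) {k : ℕ}
    (hcut : ∀ F : Finset E, F.card < k → ∃ w : G.Walk u t,
      (∀ e ∈ w.edges, e ∈ S) ∧ ∀ e ∈ w.edges, e ∉ F) :
    ∀ j : ℕ, j ≤ k → ∃ f : E → ℤ, IsFlow (G := G) S u t f ∧ dvg (G := G) S f u = j := by
  intro j
  induction j with
  | zero =>
    intro _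
    refine ⟨fun _ => 0, ⟨fun e => Or.inr (Or.inl rfl), fun e _ => rfl, fun v _ _ => ?_⟩, ?_⟩
    · simp [dvg]
    · simp [dvg]
  | succ j ih =>
    intro hjk
    obtain ⟨f, hf, hj⟩ := ih (by omega)
    by_cases ht : t ∈ Rset G S u f
    · obtain ⟨w0, hw0⟩ := ht
      obtain ⟨w, hwres, hwnd⟩ := dedup S f w0.edges.length w0 le_rfl hw0
      obtain ⟨hf', hdvg'⟩ := augment S u t f hf hut w hwres hwnd
      exact ⟨_, hf', by rw [hdvg', hj]; push_cast; ring⟩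
    · exfalso
      have hcard := dvg_eq_card S u t f hf ht
      have hlt : (Fcut G S u f).card < k := by
        have hcast : ((Fcut G S u f).card : ℤ) = (j : ℤ) := by rw [← hcard, hj]
        omega
      obtain ⟨w, hwS, hwF⟩ := hcut _ hlt
      exact ht (reach_walk S u t f hf w (u_mem_Rset G S u f) hwS hwF)

end Residual
end Flow

section Main
variable {G : Multigraph V E}

lemma pigeon {k : ℕ} {a b : V} (P : Fin k → G.Walk a b)
    (hdisj : ∀ i j, i ≠ j → ∀ e, e ∈ (P i).edges → e ∉ (P j).edges)
    (F : Finset E) (hF : F.card < k) : ∃ i, ∀ e ∈ (P i).edges, e ∉ F := by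
  by_contra hcon
  push_neg at hcon
  choose g hg1 hg2 using hcon
  have hinj : Function.Injective fun i => (⟨g i, hg2 i⟩ : F) := by
    intro i j hij
    by_contra hne
    have hgij : g i = g j := congrArg Subtype.val hij
    exact hdisj i j hne (g i) (hg1 i) (hgij ▸ hg1 j)
  have hle := Fintype.card_le_of_injective _ hinj
  simp only [Fintype.card_coe, Fintype.card_fin] at hle
  omega

lemma key_trans {k : ℕ} {v₁ v₂ v₃ : V} (h13 : v₁ ≠ v₃)
    (hP : G.HasEdgeDisjointPaths k v₁ v₂) (hQ : G.HasEdgeDisjointPaths k v₂ v₃) :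
    G.HasEdgeDisjointPaths k v₁ v₃ := by
  classical
  obtain ⟨P, hPpath, hPdisj⟩ := hP
  obtain ⟨Q, hQpath, hQdisj⟩ := hQ
  set S : Finset E := (Finset.univ.biUnion fun i : Fin k => (P i).edges.toFinset) ∪
      (Finset.univ.biUnion fun i : Fin k => (Q i).edges.toFinset) with hS
  have hPS : ∀ i, ∀ e ∈ (P i).edges, e ∈ S := fun i e he =>
    Finset.mem_union_left _ (Finset.mem_biUnion.2 ⟨i, Finset.mem_univ _, List.mem_toFinset.2 he⟩)
  have hQS : ∀ i, ∀ e ∈ (Q i).edges, e ∈ S := fun i e he =>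
    Finset.mem_union_right _ (Finset.mem_biUnion.2 ⟨i, Finset.mem_univ _, List.mem_toFinset.2 he⟩)
  have hcut : ∀ F : Finset E, F.card < k → ∃ w : G.Walk v₁ v₃,
      (∀ e ∈ w.edges, e ∈ S) ∧ ∀ e ∈ w.edges, e ∉ F := by
    intro F hF
    obtain ⟨i, hi⟩ := pigeon P hPdisj F hF
    obtain ⟨j', hj'⟩ := pigeon Q hQdisj F hF
    refine ⟨(P i).append (Q j'), ?_, ?_⟩ <;> intro e he <;>
      rw [Walk.edges_append, List.mem_append] at he
    · rcases he with h | h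
      · exact hPS i e h
      · exact hQS j' e h
    · rcases he with h | h
      · exact hi e h
      · exact hj' e h
  obtain ⟨f, hf, hdvg⟩ := flow_exists S v₁ v₃ h13 hcut k le_rfl
  obtain ⟨L, hlen, hLne, hpw⟩ := decompose S v₁ v₃ k f hf h13 hdvg
  choose pth hp1 hp2 using fun w : G.Walk v₁ v₃ => Walk.exists_path_le w
  refine ⟨fun i => pth (L.get (i.cast hlen.symm)), fun i => hp1 _, ?_⟩
  intro i j hij e hei hej
  have hij' : (i.cast hlen.symm : Fin L.length) ≠ (j.cast hlen.symm) := by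
    simpa [Fin.ext_iff] using hij
  have hget := List.pairwise_iff_get.1 hpw
  have hei' : e ∈ (L.get (i.cast hlen.symm)).edges := hp2 _ e hei
  have hej' : e ∈ (L.get (j.cast hlen.symm)).edges := hp2 _ e hej
  rcases lt_or_gt_of_ne hij' with h | h
  · exact hget _ _ h e hei' hej'
  · exact hget _ _ h e hej' hei'

end Main

end Multigraph


/-- For a positive integer `k`, the relation `R^k` (equal, or
joined by `k` pairwise edge-disjoint paths) is an equivalence relation; in
particular it is transitive on triples of distinct vertices. -/
theorem rel_equivalence {V E : Type} (G : Multigraph V E) (k : ℕ) (hk : 0 < k) :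
    Equivalence (G.Rel k) ∧
      ∀ v₁ v₂ v₃ : V, v₁ ≠ v₂ → v₂ ≠ v₃ → v₁ ≠ v₃ →
        G.HasEdgeDisjointPaths k v₁ v₂ → G.HasEdgeDisjointPaths k v₂ v₃ →
        G.HasEdgeDisjointPaths k v₁ v₃ := by
  classical
  refine ⟨⟨fun v => Or.inl rfl, ?_, ?_⟩,
    fun v₁ v₂ v₃ _ _ h13 hP hQ => Multigraph.key_trans h13 hP hQ⟩
  · rintro a b (rfl | h)
    · exact Or.inl rfl
    · exact Or.inr h.symm
  · rintro a b c (rfl | hab) (rfl | hbc)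
    · exact Or.inl rfl
    · exact Or.inr hbc
    · exact Or.inr hab
    · by_cases hac : a = c
      · exact Or.inl hac
      · exact Or.inr (Multigraph.key_trans hac hab hbc)
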